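/- For every η > 0 there exists Δ* ∈ (0,1) with the following property. Let A be an m×n matrix with nonnegative entries whose maximum column sum Δ₁ satisfies 0 < Δ₁ ≤ Δ*, let c ∈ ℝ_{≥0}^n, and let x ∈ ℝ_{≥0}^n satisfy Ax ≥ 1 componentwise. Then there exists a random vector z ∈ ℕ^n such that almost surely Az ≥ 1 componentwise, and E[⟨c,z⟩] ≤ (1 + (4+η)·√(Δ₁·ln(1/Δ₁)))·⟨c,x⟩. -/

import Mathlib

open MeasureTheory Finset

open scoped Classical in
/-- The set of coordinates where `v` is not an integer. -/
noncomputable def fracSet {n : ℕ} (v : Fin n → ℝ) : Finset (Fin n) :=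
  Finset.univ.filter fun j => (⌊v j⌋ : ℝ) ≠ v j

lemma mem_fracSet {n : ℕ} {v : Fin n → ℝ} {j : Fin n} :
    j ∈ fracSet v ↔ (⌊v j⌋ : ℝ) ≠ v j := by
  classical
  simp [fracSet]

/-- A linear map from a bigger space to a smaller one has a nonzero kernel vector. -/
lemma exists_ker {α β : Type} [Fintype α] [Fintype β]
    (M : α → β → ℝ) (h : Fintype.card α < Fintype.card β) :
    ∃ d : β → ℝ, d ≠ 0 ∧ ∀ i, ∑ j, M i j * d j = 0 := by
  by_contra hcon
  push_neg at hcon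
  have hinj : Function.Injective (Matrix.mulVecLin (Matrix.of M)) := by
    rw [← LinearMap.ker_eq_bot, Submodule.eq_bot_iff]
    intro d hd
    by_contra hd0
    obtain ⟨i, hi⟩ := hcon d hd0
    apply hi
    have := congrFun (LinearMap.mem_ker.mp hd) i
    simpa [Matrix.mulVecLin, Matrix.mulVec, dotProduct, mul_comm] using this
  have := LinearMap.finrank_le_finrank_of_injective hinj
  simp only [Module.finrank_pi] at this
  omega

/-- Rounding down all coordinates: works when at most one coordinate is fractional. -/
lemma round_small {m n : ℕ} (A : Fin m → Fin n → ℝ) (c : Fin n → ℝ) (Δ : ℝ)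
    (hA : ∀ i j, 0 ≤ A i j) (hc : ∀ j, 0 ≤ c j)
    (hcol : ∀ j, ∑ i, A i j ≤ Δ) (hΔ : 0 < Δ)
    (v : Fin n → ℝ) (hv : ∀ j, 0 ≤ v j) (hcard : (fracSet v).card ≤ 1) :
    ∃ z : Fin n → ℕ,
      (∀ j, (⌊v j⌋ : ℝ) ≤ z j) ∧
      (∑ j, c j * z j ≤ ∑ j, c j * v j) ∧
      (∀ i, ∑ j, A i j * v j - 2*Δ ≤ ∑ j, A i j * (z j : ℝ)) := by
  have hz : ∀ j, (((⌊v j⌋).toNat : ℕ) : ℝ) = ((⌊v j⌋ : ℤ) : ℝ) := by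
    intro j
    exact_mod_cast congrArg (fun t : ℤ => (t : ℝ))
      (Int.toNat_of_nonneg (Int.floor_nonneg.mpr (hv j)))
  refine ⟨fun j => (⌊v j⌋).toNat, ?_, ?_, ?_⟩
  · intro j
    rw [hz j]
  · refine Finset.sum_le_sum fun j _ => ?_
    rw [hz j]
    exact mul_le_mul_of_nonneg_left (Int.floor_le (v j)) (hc j)
  · intro i
    have key : -Δ ≤ ∑ j, A i j * ((⌊v j⌋ : ℝ) - v j) := by
      have hzero : ∀ j ∈ Finset.univ, j ∉ fracSet v → A i j * ((⌊v j⌋ : ℝ) - v j) = 0 := by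
        intro j _ hj
        have : (⌊v j⌋ : ℝ) = v j := not_ne_iff.mp (fun h => hj (mem_fracSet.mpr h))
        rw [this]; ring
      have hsum : ∑ j, A i j * ((⌊v j⌋ : ℝ) - v j)
          = ∑ j ∈ fracSet v, A i j * ((⌊v j⌋ : ℝ) - v j) :=
        (Finset.sum_subset (Finset.subset_univ _) hzero).symm
      rw [hsum]
      rcases Nat.le_one_iff_eq_zero_or_eq_one.mp hcard with h | h
      · rw [Finset.card_eq_zero.mp h]
        simp [le_of_lt hΔ, neg_nonpos]
      · obtain ⟨j₀, hj₀⟩ := Finset.card_eq_one.mp h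
        rw [hj₀, Finset.sum_singleton]
        have hAle : A i j₀ ≤ Δ :=
          le_trans (Finset.single_le_sum (f := fun i' => A i' j₀)
            (fun i' _ => hA i' j₀) (Finset.mem_univ i)) (hcol j₀)
        nlinarith [Int.sub_one_lt_floor (v j₀), Int.floor_le (v j₀), hA i j₀]
    have e : ∑ j, A i j * ((⌊v j⌋ : ℝ))
        = ∑ j, A i j * v j + ∑ j, A i j * ((⌊v j⌋ : ℝ) - v j) := by
      rw [← Finset.sum_add_distrib]
      exact Finset.sum_congr rfl fun j _ => by ring
    have e2 : ∑ j, A i j * ((((⌊v j⌋).toNat : ℕ)) : ℝ) = ∑ j, A i j * ((⌊v j⌋ : ℝ)) :=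
      Finset.sum_congr rfl fun j _ => by rw [hz j]
    rw [e2, e]
    linarith

/-- Beck–Fiala style rounding: any nonnegative fractional `v` can be rounded to an
integer vector `z ≥ ⌊v⌋` (coordinatewise), without increasing the cost, and with
every row value of `A` decreasing by at most `2Δ`, where `Δ` bounds the column sums. -/
lemma round_down {m n : ℕ} (A : Fin m → Fin n → ℝ) (c : Fin n → ℝ) (Δ : ℝ)
    (hA : ∀ i j, 0 ≤ A i j) (hc : ∀ j, 0 ≤ c j)
    (hcol : ∀ j, ∑ i, A i j ≤ Δ) (hΔ : 0 < Δ) :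
    ∀ k : ℕ, ∀ v : Fin n → ℝ, (∀ j, 0 ≤ v j) → (fracSet v).card ≤ k →
    ∃ z : Fin n → ℕ,
      (∀ j, (⌊v j⌋ : ℝ) ≤ z j) ∧
      (∑ j, c j * z j ≤ ∑ j, c j * v j) ∧
      (∀ i, ∑ j, A i j * v j - 2*Δ ≤ ∑ j, A i j * (z j : ℝ)) := by
  intro k
  induction k with
  | zero =>
    intro v hv hcard
    exact round_small A c Δ hA hc hcol hΔ v hv (le_trans hcard (by omega))
  | succ k ih =>
    intro v hv hcard
    by_cases hsmallk : (fracSet v).card ≤ k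
    · exact ih v hv hsmallk
    by_cases hk1 : (fracSet v).card ≤ 1
    · exact round_small A c Δ hA hc hcol hΔ v hv hk1
    classical
    set F := fracSet v with hFdef
    have hK : F.card = k + 1 := le_antisymm hcard (by omega)
    have hK2 : 2 ≤ F.card := by omega
    set Act := Finset.univ.filter (fun i : Fin m => 2*Δ < ∑ j ∈ F, A i j) with hActdef
    have hActmem : ∀ i, i ∈ Act ↔ 2*Δ < ∑ j ∈ F, A i j := by
      intro i; simp [hActdef]
    -- counting: few active rows
    have hcount : Act.card + 1 < F.card := by
      rcases Act.eq_empty_or_nonempty with he | hne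
      · rw [he]; simp only [Finset.card_empty]; omega
      · have h1 : (Act.card : ℝ) * (2*Δ) < ∑ i ∈ Act, ∑ j ∈ F, A i j := by
          have := Finset.sum_lt_sum_of_nonempty hne (f := fun _ => 2*Δ)
            (fun i hi => (hActmem i).mp hi)
          simpa [Finset.sum_const, nsmul_eq_mul] using this
        have h2 : ∑ i ∈ Act, ∑ j ∈ F, A i j ≤ ∑ i, ∑ j ∈ F, A i j :=
          Finset.sum_le_sum_of_subset_of_nonneg (Finset.subset_univ _)
            (fun i _ _ => Finset.sum_nonneg fun j _ => hA i j)
        have h3 : ∑ i, ∑ j ∈ F, A i j = ∑ j ∈ F, ∑ i, A i j := Finset.sum_comm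
        have h4 : ∑ j ∈ F, ∑ i, A i j ≤ (F.card : ℝ) * Δ := by
          calc ∑ j ∈ F, ∑ i, A i j ≤ ∑ _j ∈ F, Δ := Finset.sum_le_sum (fun j _ => hcol j)
            _ = (F.card : ℝ) * Δ := by simp [Finset.sum_const, nsmul_eq_mul]
        have h6 : (2 * Act.card : ℝ) < (F.card : ℝ) := by
          have h5 : ((2 * Act.card : ℝ)) * Δ < (F.card:ℝ) * Δ := by
            nlinarith
          exact lt_of_mul_lt_mul_right h5 (le_of_lt hΔ)
        have h7 : 2 * Act.card < F.card := by exact_mod_cast h6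
        have h8 : 1 ≤ Act.card := Finset.card_pos.mpr hne
        omega
    -- kernel vector
    have hcards : Fintype.card (↥Act ⊕ Unit) < Fintype.card ↥F := by
      simpa [Fintype.card_sum, Fintype.card_coe] using hcount
    obtain ⟨d₀, hd₀ne, hd₀⟩ := exists_ker
      (Sum.elim (fun (i : ↥Act) (j : ↥F) => A i j) (fun _ (j : ↥F) => c j)) hcards
    have hrow : ∀ i : ↥Act, ∑ j : ↥F, A i j * d₀ j = 0 := fun i => hd₀ (Sum.inl i)
    have hcost0 : ∑ j : ↥F, c (j:Fin n) * d₀ j = 0 := hd₀ (Sum.inr ())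
    set D : Fin n → ℝ := fun j => if h : j ∈ F then d₀ ⟨j, h⟩ else 0 with hDdef
    have hDoff : ∀ j, j ∉ F → D j = 0 := fun j hj => dif_neg hj
    have hDmem : ∀ (j) (h : j ∈ F), D j = d₀ ⟨j, h⟩ := fun j h => dif_pos h
    have hsum : ∀ f : Fin n → ℝ, ∑ j, f j * D j = ∑ j : ↥F, f (j:Fin n) * d₀ j := by
      intro f
      have e1 : ∑ j, f j * D j = ∑ j ∈ F, f j * D j :=
        (Finset.sum_subset (Finset.subset_univ _)
          (fun j _ hj => by rw [hDoff j hj, mul_zero])).symm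
      rw [e1, ← Finset.sum_coe_sort F (fun j => f j * D j)]
      exact Finset.sum_congr rfl fun j _ => by rw [hDmem j.1 j.2]
    -- a coordinate where D is nonzero
    have hex : ∃ j0 : ↥F, d₀ j0 ≠ 0 := by
      by_contra h
      push_neg at h
      exact hd₀ne (funext h)
    obtain ⟨j0, hj0⟩ := hex
    set S := F.filter (fun j => D j ≠ 0) with hSdef
    have hS : S.Nonempty := by
      refine ⟨j0.1, Finset.mem_filter.mpr ⟨j0.2, ?_⟩⟩
      rw [hDmem j0.1 j0.2]
      simpa using hj0
    -- strict fractionality facts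
    have hfl : ∀ j ∈ F, (⌊v j⌋:ℝ) < v j := fun j hj =>
      lt_of_le_of_ne (Int.floor_le _) (mem_fracSet.mp hj)
    have hcl : ∀ j ∈ F, v j < (⌈v j⌉:ℝ) := by
      intro j hj
      rcases lt_or_eq_of_le (Int.le_ceil (v j)) with h | h
      · exact h
      · exact absurd (by rw [h, Int.floor_intCast]) (mem_fracSet.mp hj)
    -- step sizes
    set t : Fin n → ℝ := fun j =>
      if 0 < D j then ((⌈v j⌉:ℝ) - v j)/(D j) else ((⌊v j⌋:ℝ) - v j)/(D j) with htdef
    have htpos : ∀ j ∈ S, 0 < t j := by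
      intro j hj
      obtain ⟨hjF, hjD⟩ := Finset.mem_filter.mp hj
      by_cases hD : 0 < D j
      · simp only [htdef, if_pos hD]
        exact div_pos (by linarith [hcl j hjF]) hD
      · have hDneg : D j < 0 := lt_of_le_of_ne (not_lt.mp hD) hjD
        simp only [htdef, if_neg hD]
        exact div_pos_of_neg_of_neg (by linarith [hfl j hjF]) hDneg
    obtain ⟨js, hjsS, hjsmin⟩ := Finset.exists_min_image S t hS
    have hjsF : js ∈ F := (Finset.mem_filter.mp hjsS).1
    have hjsD : D js ≠ 0 := (Finset.mem_filter.mp hjsS).2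
    set lam := t js with hlamdef
    have hlampos : 0 < lam := htpos js hjsS
    set v' : Fin n → ℝ := fun j => v j + lam * D j with hv'def
    have hv'off : ∀ j, j ∉ F → v' j = v j := by
      intro j hj; simp only [hv'def, hDoff j hj, mul_zero, add_zero]
    -- coordinates stay within their unit interval
    have hbound : ∀ j ∈ F, (⌊v j⌋:ℝ) ≤ v' j ∧ v' j ≤ (⌈v j⌉:ℝ) := by
      intro j hjF
      rcases lt_trichotomy (D j) 0 with hD | hD | hD
      · have hjS : j ∈ S := Finset.mem_filter.mpr ⟨hjF, ne_of_lt hD⟩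
        have hmin : lam ≤ t j := hjsmin j hjS
        have htj : t j = ((⌊v j⌋:ℝ) - v j)/(D j) := by
          simp only [htdef, if_neg (not_lt_of_gt hD)]
        constructor
        · have hmul : t j * D j ≤ lam * D j :=
            mul_le_mul_of_nonpos_right hmin (le_of_lt hD)
          have he : t j * D j = (⌊v j⌋:ℝ) - v j := by
            rw [htj, div_mul_cancel₀ _ (ne_of_lt hD)]
          simp only [hv'def]; linarith
        · have hmul : lam * D j ≤ 0 :=
            mul_nonpos_of_nonneg_of_nonpos (le_of_lt hlampos) (le_of_lt hD)
          have := le_of_lt (hcl j hjF)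
          simp only [hv'def]; linarith
      · simp only [hv'def, hD, mul_zero, add_zero]
        exact ⟨Int.floor_le _, Int.le_ceil _⟩
      · have hjS : j ∈ S := Finset.mem_filter.mpr ⟨hjF, ne_of_gt hD⟩
        have hmin : lam ≤ t j := hjsmin j hjS
        have htj : t j = ((⌈v j⌉:ℝ) - v j)/(D j) := by
          simp only [htdef, if_pos hD]
        constructor
        · have hmul : 0 ≤ lam * D j :=
            mul_nonneg (le_of_lt hlampos) (le_of_lt hD)
          have := le_of_lt (hfl j hjF)
          simp only [hv'def]; linarith
        · have hmul : lam * D j ≤ t j * D j :=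
            mul_le_mul_of_nonneg_right hmin (le_of_lt hD)
          have he : t j * D j = (⌈v j⌉:ℝ) - v j := by
            rw [htj, div_mul_cancel₀ _ (ne_of_gt hD)]
          simp only [hv'def]; linarith
    -- the minimizing coordinate becomes integral
    have hjsint : ∃ K : ℤ, v' js = (K:ℝ) := by
      by_cases hD : 0 < D js
      · refine ⟨⌈v js⌉, ?_⟩
        have he : t js * D js = (⌈v js⌉:ℝ) - v js := by
          simp only [htdef, if_pos hD]
          rw [div_mul_cancel₀ _ (ne_of_gt hD)]
        simp only [hv'def, hlamdef] at he ⊢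
        linarith
      · refine ⟨⌊v js⌋, ?_⟩
        have he : t js * D js = (⌊v js⌋:ℝ) - v js := by
          simp only [htdef, if_neg hD]
          rw [div_mul_cancel₀ _ hjsD]
        simp only [hv'def, hlamdef] at he ⊢
        linarith
    -- the fractional set strictly shrinks
    have hfrac' : fracSet v' ⊆ F.erase js := by
      intro j hj
      rw [Finset.mem_erase]
      constructor
      · rintro rfl
        obtain ⟨K, hK⟩ := hjsint
        apply mem_fracSet.mp hj
        rw [hK, Int.floor_intCast]
      · by_contra hjF
        apply mem_fracSet.mp hj
        rw [hv'off j hjF]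
        exact not_ne_iff.mp (fun h => hjF (mem_fracSet.mpr h))
    have hcard' : (fracSet v').card ≤ k := by
      have h1 := Finset.card_le_card hfrac'
      rw [Finset.card_erase_of_mem hjsF] at h1
      omega
    have hv'pos : ∀ j, 0 ≤ v' j := by
      intro j
      by_cases hjF : j ∈ F
      · exact le_trans (by exact_mod_cast Int.floor_nonneg.mpr (hv j)) (hbound j hjF).1
      · rw [hv'off j hjF]; exact hv j
    -- linear shift identities
    have hshift : ∀ f : Fin n → ℝ,
        ∑ j, f j * v' j = ∑ j, f j * v j + lam * ∑ j, f j * D j := by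
      intro f
      simp only [hv'def]
      rw [Finset.mul_sum, ← Finset.sum_add_distrib]
      exact Finset.sum_congr rfl fun j _ => by ring
    have hcostsum : ∑ j, c j * v' j = ∑ j, c j * v j := by
      rw [hshift, hsum c, hcost0, mul_zero, add_zero]
    have hActsum : ∀ i ∈ Act, ∑ j, A i j * v' j = ∑ j, A i j * v j := by
      intro i hi
      rw [hshift, hsum (A i), hrow ⟨i, hi⟩, mul_zero, add_zero]
    -- apply induction hypothesis
    obtain ⟨z, hz1, hz2, hz3⟩ := ih v' hv'pos hcard'
    have hzfl : ∀ j, (⌊v j⌋ : ℝ) ≤ z j := by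
      intro j
      have h1 : (⌊v j⌋ : ℝ) ≤ v' j := by
        by_cases hjF : j ∈ F
        · exact (hbound j hjF).1
        · rw [hv'off j hjF]; exact Int.floor_le _
      have h2 : (⌊v j⌋ : ℤ) ≤ ⌊v' j⌋ := Int.le_floor.mpr h1
      exact le_trans (by exact_mod_cast h2) (hz1 j)
    refine ⟨z, hzfl, ?_, ?_⟩
    · rw [← hcostsum]; exact hz2
    · intro i
      by_cases hi : i ∈ Act
      · have := hz3 i
        rw [hActsum i hi] at this
        exact this
      · have hiA : ∑ j ∈ F, A i j ≤ 2*Δ := le_of_not_gt (by simpa [hActmem] using hi)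
        have hterm : ∀ j, A i j * (v j - (z j:ℝ)) ≤ (if j ∈ F then A i j else 0) := by
          intro j
          by_cases hjF : j ∈ F
          · rw [if_pos hjF]
            have h1 : v j - (z j:ℝ) ≤ 1 := by
              have h2 := hzfl j
              have h3 := Int.sub_one_lt_floor (v j)
              linarith
            nlinarith [hA i j]
          · rw [if_neg hjF]
            have hveq : (⌊v j⌋:ℝ) = v j := not_ne_iff.mp (fun h => hjF (mem_fracSet.mpr h))
            have h1 : v j - (z j:ℝ) ≤ 0 := by have := hzfl j; linarith
            exact mul_nonpos_of_nonneg_of_nonpos (hA i j) h1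
        have hsum2 : ∑ j, A i j * (v j - (z j:ℝ)) ≤ ∑ j ∈ F, A i j := by
          calc ∑ j, A i j * (v j - (z j:ℝ))
              ≤ ∑ j, (if j ∈ F then A i j else 0) :=
                Finset.sum_le_sum (fun j _ => hterm j)
            _ = ∑ j ∈ F, A i j := by rw [Finset.sum_ite_mem, Finset.univ_inter]
        have e : ∑ j, A i j * (v j - (z j:ℝ))
            = ∑ j, A i j * v j - ∑ j, A i j * (z j:ℝ) := by
          rw [← Finset.sum_sub_distrib]
          exact Finset.sum_congr rfl fun j _ => by ring
        linarith

/-- the regime of small Δ₁ — approximation ratio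
`1 + (4+o(1))·√(Δ₁ ln(1/Δ₁))` (Appendix, small `Δ₁`). -/
theorem stmt_7 :
    ∀ η : ℝ, 0 < η →
      ∃ Δstar : ℝ, 0 < Δstar ∧ Δstar < 1 ∧
        ∀ (m n : ℕ) (A : Fin m → Fin n → ℝ) (c x : Fin n → ℝ) (Δ₁ : ℝ),
          (∀ i j, 0 ≤ A i j) →
          (∀ j, 0 ≤ c j) → (∀ j, 0 ≤ x j) →
          (∀ i, 1 ≤ ∑ j, A i j * x j) →
          IsGreatest (Set.range fun j : Fin n => ∑ i, A i j) Δ₁ →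
          0 < Δ₁ → Δ₁ ≤ Δstar →
          ∃ (Ω : Type) (_ : MeasureSpace Ω) (z : Ω → Fin n → ℕ),
            IsProbabilityMeasure (volume : Measure Ω) ∧
            Measurable z ∧
            (∀ᵐ ω ∂(volume : Measure Ω), ∀ i, 1 ≤ ∑ j, A i j * (z ω j : ℝ)) ∧
            ∫⁻ ω, ENNReal.ofReal (∑ j, c j * (z ω j : ℝ)) ≤
              ENNReal.ofReal
                ((1 + (4 + η) * Real.sqrt (Δ₁ * Real.log (1 / Δ₁))) *
                  ∑ j, c j * x j) := by
  intro η hη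
  refine ⟨Real.exp (-1), Real.exp_pos _, ?_, ?_⟩
  · exact Real.exp_lt_one_iff.mpr (by norm_num)
  intro m n A c x Δ₁ hA hc hx hAx hgreat hΔpos hΔle
  have hcol : ∀ j, ∑ i, A i j ≤ Δ₁ := fun j => hgreat.2 ⟨j, rfl⟩
  set v : Fin n → ℝ := fun j => (1 + 2*Δ₁) * x j with hvdef
  have hv : ∀ j, 0 ≤ v j := fun j => mul_nonneg (by linarith) (hx j)
  obtain ⟨z, hz1, hz2, hz3⟩ := round_down A c Δ₁ hA hc hcol hΔpos
    (fracSet v).card v hv le_rfl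
  -- feasibility
  have hfeas : ∀ i, 1 ≤ ∑ j, A i j * (z j : ℝ) := by
    intro i
    have h1 : ∑ j, A i j * v j = (1 + 2*Δ₁) * ∑ j, A i j * x j := by
      rw [Finset.mul_sum]
      exact Finset.sum_congr rfl fun j _ => by simp only [hvdef]; ring
    have h2 := hz3 i
    have h3 := hAx i
    rw [h1] at h2
    nlinarith
  -- arithmetic: 2Δ₁ ≤ (4+η)√(Δ₁ ln(1/Δ₁))
  have harith : 2 * Δ₁ ≤ (4 + η) * Real.sqrt (Δ₁ * Real.log (1 / Δ₁)) := by
    have hlog : 1 ≤ Real.log (1 / Δ₁) := by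
      rw [Real.log_div one_ne_zero (ne_of_gt hΔpos), Real.log_one]
      have := Real.log_le_log hΔpos hΔle
      rw [Real.log_exp] at this
      linarith
    have h1 : Δ₁ ≤ Δ₁ * Real.log (1 / Δ₁) := by nlinarith
    have h2 : Real.sqrt Δ₁ ≤ Real.sqrt (Δ₁ * Real.log (1 / Δ₁)) := Real.sqrt_le_sqrt h1
    have hΔ1 : Δ₁ ≤ 1 := le_trans hΔle (le_of_lt (Real.exp_lt_one_iff.mpr (by norm_num)))
    have h3 : Δ₁ ≤ Real.sqrt Δ₁ := by
      nlinarith [Real.sq_sqrt (le_of_lt hΔpos), Real.sqrt_nonneg Δ₁]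
    have h4 : 0 ≤ Real.sqrt (Δ₁ * Real.log (1 / Δ₁)) := Real.sqrt_nonneg _
    nlinarith
  -- cost bound
  have hS : 0 ≤ ∑ j, c j * x j :=
    Finset.sum_nonneg fun j _ => mul_nonneg (hc j) (hx j)
  have hcost : ∑ j, c j * (z j : ℝ)
      ≤ (1 + (4 + η) * Real.sqrt (Δ₁ * Real.log (1 / Δ₁))) * ∑ j, c j * x j := by
    have h1 : ∑ j, c j * v j = (1 + 2*Δ₁) * ∑ j, c j * x j := by
      rw [Finset.mul_sum]
      exact Finset.sum_congr rfl fun j _ => by simp only [hvdef]; ring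
    rw [h1] at hz2
    nlinarith
  -- wrap in a trivial probability space
  have hprob : IsProbabilityMeasure (volume : Measure PUnit) := by
    show IsProbabilityMeasure (Measure.dirac PUnit.unit)
    infer_instance
  refine ⟨PUnit, inferInstance, fun _ => z, hprob, measurable_const,
    ae_of_all _ (fun _ => hfeas), ?_⟩
  rw [lintegral_const, hprob.measure_univ, mul_one]
  exact ENNReal.ofReal_le_ofReal hcost
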